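/- Let S be a unital inverse semigroup, E its idempotents, X the set of unital characters on E, and for χ ∈ X and s ∈ S with χ(s*s)=1 let χ_s(e) = χ(s* e s). Writing P_χ for the minimal idempotent corresponding to χ, the relation P_{χ_s} corresponds under the standard form to conjugation: if P_χ has standard form u_e ∏_{f<e}(1−u_f) with e ≤ s*s, then P_{χ_s} has standard form u_{ses*} ∏_{f<e}(1 − u_{sfs*}). -/

import Mathlib

/-- The set `X` of unital semilattice characters on the idempotents of `S`, encoded as
maps `χ : S → Bool` which are multiplicative on idempotents and unital. -/
abbrev IdemChar (S : Type*) [Monoid S] : Type _ :=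
  {χ : S → Bool //
    (∀ e f : S, e * e = e → f * f = f → χ (e * f) = (χ e && χ f)) ∧ χ 1 = true}

/-- The function `u_a : X → ℤ`, `u_a(χ) = χ(a)`. -/
def uFun {S : Type*} [Monoid S] (a : S) : IdemChar S → ℤ :=
  fun χ => if χ.1 a then 1 else 0

/-- The minimal idempotent attached to the values `g : S → Bool` on idempotents:
`P_g = ∏_{e idempotent, g(e)=1} u_e · ∏_{f idempotent, g(f)=0} (1 - u_f)`. -/
def Pmin {S : Type*} [Monoid S] [Fintype S] [DecidableEq S] (g : S → Bool) :
    IdemChar S → ℤ :=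
  (∏ e ∈ Finset.univ.filter (fun e : S => e * e = e ∧ g e = true), uFun e) *
    ∏ f ∈ Finset.univ.filter (fun f : S => f * f = f ∧ g f = false), (1 - uFun f)

theorem isg_idem_mul {S : Type*} [Monoid S] (inv : S → S)
    (h1 : ∀ s, s * inv s * s = s) (h2 : ∀ s, inv s * s * inv s = inv s)
    (huniq : ∀ s t, s * t * s = s → t * s * t = t → t = inv s) {a b : S}
    (ha : a * a = a) (hb : b * b = b) :
    (a * b) * (a * b) = a * b := by
  set x := inv (a * b) with hx
  have hx1 : (a * b) * x * (a * b) = a * b := h1 (a * b)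
  have hx2 : x * (a * b) * x = x := h2 (a * b)
  have ha' : ∀ z : S, a * (a * z) = a * z := fun z => by rw [← mul_assoc, ha]
  have hb' : ∀ z : S, b * (b * z) = b * z := fun z => by rw [← mul_assoc, hb]
  have hx2l : ∀ z : S, x * (a * (b * (x * z))) = x * z := fun z => by
    have := congrArg (· * z) hx2
    simpa only [mul_assoc] using this
  have k1 : (a * b) * (b * x * a) * (a * b) = a * b := by
    simp only [mul_assoc] at hx1 ⊢
    rw [hb', ha']
    exact hx1
  have k2 : (b * x * a) * (a * b) * (b * x * a) = b * x * a := by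
    simp only [mul_assoc]
    rw [ha', hb', hx2l]
  have yy : (b * x * a) * (b * x * a) = b * x * a := by
    simp only [mul_assoc]
    rw [hx2l]
  have e1 : a * b = inv (b * x * a) := huniq _ _ k2 k1
  have e2 : b * x * a = inv (b * x * a) := by
    refine huniq _ _ ?_ ?_ <;> rw [yy, yy]
  rw [e1, ← e2] at *
  exact yy

theorem isg_comm {S : Type*} [Monoid S] (inv : S → S)
    (h1 : ∀ s, s * inv s * s = s) (h2 : ∀ s, inv s * s * inv s = inv s)
    (huniq : ∀ s t, s * t * s = s → t * s * t = t → t = inv s) {a b : S}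
    (ha : a * a = a) (hb : b * b = b) :
    a * b = b * a := by
  have hab := isg_idem_mul inv h1 h2 huniq ha hb
  have hba := isg_idem_mul inv h1 h2 huniq hb ha
  have ha' : ∀ z : S, a * (a * z) = a * z := fun z => by rw [← mul_assoc, ha]
  have hb' : ∀ z : S, b * (b * z) = b * z := fun z => by rw [← mul_assoc, hb]
  have hab' : a * (b * (a * b)) = a * b := by simpa only [mul_assoc] using hab
  have hba' : b * (a * (b * a)) = b * a := by simpa only [mul_assoc] using hba
  have k1 : (a * b) * (b * a) * (a * b) = a * b := by
    simp only [mul_assoc]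
    rw [hb', ha']
    exact hab'
  have k2 : (b * a) * (a * b) * (b * a) = b * a := by
    simp only [mul_assoc]
    rw [ha', hb']
    exact hba'
  have e1 : b * a = inv (a * b) := huniq _ _ k1 k2
  have e2 : a * b = inv (a * b) := by
    refine huniq _ _ ?_ ?_ <;> rw [hab, hab]
  rw [e1, ← e2]

theorem Pmin_apply {S : Type*} [Monoid S] [Fintype S] [DecidableEq S]
    (g : S → Bool) (ψ : IdemChar S) :
    Pmin g ψ = if ∀ a : S, a * a = a → ψ.1 a = g a then 1 else 0 := by
  classical
  have hP : Pmin g ψ =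
      (∏ a ∈ Finset.univ.filter (fun a : S => a * a = a ∧ g a = true),
        (if ψ.1 a then (1:ℤ) else 0)) *
      ∏ a ∈ Finset.univ.filter (fun a : S => a * a = a ∧ g a = false),
        (1 - if ψ.1 a then (1:ℤ) else 0) := by
    simp [Pmin, uFun, Finset.prod_apply]
  rw [hP]
  by_cases h : ∀ a : S, a * a = a → ψ.1 a = g a
  · rw [if_pos h, Finset.prod_eq_one, Finset.prod_eq_one, one_mul]
    · intro a ha
      simp only [Finset.mem_filter, Finset.mem_univ, true_and] at ha
      rw [h a ha.1, ha.2]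
      norm_num
    · intro a ha
      simp only [Finset.mem_filter, Finset.mem_univ, true_and] at ha
      rw [h a ha.1, ha.2]
      simp
  · rw [if_neg h]
    push_neg at h
    obtain ⟨a, ha, hne⟩ := h
    cases hg : g a with
    | false =>
      have hψ : ψ.1 a = true := by cases hψa : ψ.1 a <;> simp_all
      have hz : (∏ a ∈ Finset.univ.filter (fun a : S => a * a = a ∧ g a = false),
          (1 - if ψ.1 a then (1:ℤ) else 0)) = 0 :=
        Finset.prod_eq_zero (i := a) (by simp [ha, hg]) (by simp [hψ])
      rw [hz, mul_zero]
    | true =>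
      have hψ : ψ.1 a = false := by cases hψa : ψ.1 a <;> simp_all
      have hz : (∏ a ∈ Finset.univ.filter (fun a : S => a * a = a ∧ g a = true),
          (if ψ.1 a then (1:ℤ) else 0)) = 0 :=
        Finset.prod_eq_zero (i := a) (by simp [ha, hg]) (by simp [hψ])
      rw [hz, zero_mul]

theorem Std_apply {S : Type*} [Monoid S] [Fintype S] [DecidableEq S]
    (e : S) (ψ : IdemChar S) :
    (uFun e * ∏ f ∈ Finset.univ.filter (fun f : S => f * f = f ∧ e * f = f ∧ f ≠ e),
        (1 - uFun f)) ψ =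
      if ψ.1 e = true ∧ ∀ f : S, f * f = f → e * f = f → f ≠ e → ψ.1 f = false
        then 1 else 0 := by
  classical
  have hP : (uFun e * ∏ f ∈ Finset.univ.filter
        (fun f : S => f * f = f ∧ e * f = f ∧ f ≠ e), (1 - uFun f)) ψ =
      (if ψ.1 e then (1:ℤ) else 0) *
      ∏ f ∈ Finset.univ.filter (fun f : S => f * f = f ∧ e * f = f ∧ f ≠ e),
        (1 - if ψ.1 f then (1:ℤ) else 0) := by
    simp [uFun, Finset.prod_apply]
  rw [hP]
  by_cases h : ψ.1 e = true ∧ ∀ f : S, f * f = f → e * f = f → f ≠ e → ψ.1 f = false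
  · rw [if_pos h, h.1, if_pos rfl, one_mul, Finset.prod_eq_one]
    intro f hf
    simp only [Finset.mem_filter, Finset.mem_univ, true_and] at hf
    rw [h.2 f hf.1 hf.2.1 hf.2.2]
    norm_num
  · rw [if_neg h]
    push_neg at h
    by_cases he' : ψ.1 e = true
    · obtain ⟨f, hf1, hf2, hf3, hf4⟩ := h he'
      have hψ : ψ.1 f = true := by cases hh : ψ.1 f <;> simp_all
      have hz : (∏ f ∈ Finset.univ.filter (fun f : S => f * f = f ∧ e * f = f ∧ f ≠ e),
          (1 - if ψ.1 f then (1:ℤ) else 0)) = 0 :=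
        Finset.prod_eq_zero (i := f) (by simp [hf1, hf2, hf3]) (by simp [hψ])
      rw [hz, mul_zero]
    · rw [if_neg he', zero_mul]

/-- Let `S` be a finite unital inverse semigroup with idempotents `E`, `χ ∈ X` with
`χ(s*s) = 1`.  If `P_χ` has standard form `u_e ∏_{f < e}(1 - u_f)` with `e ≤ s*s`,
then `P_{χ_s}` (where `χ_s(a) = χ(s* a s)`) has the conjugated standard form
`u_{ses*} ∏_{f < e}(1 - u_{sfs*})`. -/
theorem Pmin_conjugation_standard_form {S : Type*} [Monoid S] [Fintype S] [DecidableEq S]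
    (inv : S → S)
    (h1 : ∀ s, s * inv s * s = s) (h2 : ∀ s, inv s * s * inv s = inv s)
    (huniq : ∀ s t, s * t * s = s → t * s * t = t → t = inv s)
    (s : S) (χ : IdemChar S) (hdom : χ.1 (inv s * s) = true)
    (e : S) (he : e * e = e) (hle : e * (inv s * s) = e)
    (hstd : Pmin χ.1 = uFun e *
      ∏ f ∈ Finset.univ.filter (fun f : S => f * f = f ∧ e * f = f ∧ f ≠ e), (1 - uFun f)) :
    Pmin (fun a : S => χ.1 (inv s * a * s)) = uFun (s * e * inv s) *
      ∏ f ∈ Finset.univ.filter (fun f : S => f * f = f ∧ e * f = f ∧ f ≠ e),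
        (1 - uFun (s * f * inv s)) := by
  classical
  have comm : ∀ {a b : S}, a * a = a → b * b = b → a * b = b * a :=
    fun ha hb => isg_comm inv h1 h2 huniq ha hb
  have idm : ∀ {a b : S}, a * a = a → b * b = b → (a * b) * (a * b) = a * b :=
    fun ha hb => isg_idem_mul inv h1 h2 huniq ha hb
  set t := inv s with htdef
  -- basic facts
  have h1' : s * (t * s) = s := by simpa only [mul_assoc] using h1 s
  have h2' : t * (s * t) = t := by simpa only [mul_assoc] using h2 s
  have hE1 : (t * s) * (t * s) = t * s := by simp only [mul_assoc]; rw [h1']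
  have hE2 : (s * t) * (s * t) = s * t := by simp only [mul_assoc]; rw [h2']
  have le : ∀ z : S, e * (e * z) = e * z := fun z => by rw [← mul_assoc, he]
  have htse : (t * s) * e = e := by rw [← comm he hE1]; exact hle
  have htse' : t * (s * e) = e := by simpa only [mul_assoc] using htse
  have lts_e : ∀ z : S, t * (s * (e * z)) = e * z := fun z => by
    have := congrArg (· * z) htse; simpa only [mul_assoc] using this
  have lst_s : ∀ z : S, s * (t * (s * z)) = s * z := fun z => by
    have := congrArg (· * z) (h1 s); simpa only [mul_assoc] using this
  have lts_t : ∀ z : S, t * (s * (t * z)) = t * z := fun z => by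
    have := congrArg (· * z) (h2 s); simpa only [mul_assoc] using this
  have hle_l : ∀ z : S, e * (t * (s * z)) = e * z := fun z => by
    have := congrArg (· * z) hle; simpa only [mul_assoc] using this
  -- e' = s*e*t facts
  have he' : (s * e * t) * (s * e * t) = s * e * t := by
    simp only [mul_assoc]; rw [lts_e, le]
  have hete' : t * (s * e * t) * s = e := by
    simp only [mul_assoc]
    rw [show e * (t * s) = e from hle]
    exact htse'
  have he'st : (s * e * t) * (s * t) = s * e * t := by
    simp only [mul_assoc]; rw [h2']
  have lste : ∀ z : S, s * (t * (s * (e * z))) = s * (e * z) := fun z => by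
    rw [lst_s]
  -- idempotency of conjugates downward
  have hconj_idem : ∀ a : S, a * a = a → (t * a * s) * (t * a * s) = t * a * s := by
    intro a ha
    have la : ∀ z : S, a * (a * z) = a * z := fun z => by rw [← mul_assoc, ha]
    calc (t * a * s) * (t * a * s) = t * ((a * (s * t)) * (a * s)) := by
          simp only [mul_assoc]
      _ = t * (((s * t) * a) * (a * s)) := by rw [comm ha hE2]
      _ = t * (a * (a * s)) := by simp only [mul_assoc]; rw [lts_t]
      _ = t * a * s := by rw [la, mul_assoc]
  -- Step A : χ is the principal filter character at e
  have hmult : ∀ b c : S, b * b = b → c * c = c →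
      decide (e * (b * c) = e) = (decide (e * b = e) && decide (e * c = e)) := by
    intro b c hb hc
    rw [← Bool.decide_and]
    refine decide_eq_decide.mpr ⟨fun h => ?_, fun h => by rw [← mul_assoc, h.1, h.2]⟩
    have hbcb : (b * c) * b = b * c := by
      rw [comm hb hc, mul_assoc, hb]
    have hbcc : (b * c) * c = b * c := by rw [mul_assoc, hc]
    constructor
    · calc e * b = (e * (b * c)) * b := by rw [h]
        _ = e * ((b * c) * b) := by rw [mul_assoc]
        _ = e * (b * c) := by rw [hbcb]
        _ = e := h
    · calc e * c = (e * (b * c)) * c := by rw [h]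
        _ = e * ((b * c) * c) := by rw [mul_assoc]
        _ = e * (b * c) := by rw [hbcc]
        _ = e := h
  let ψ₀ : IdemChar S := ⟨fun b => decide (e * b = e), hmult, by simp⟩
  have hψ₀val : ∀ b : S, ψ₀.1 b = decide (e * b = e) := fun b => rfl
  have hχ : ∀ a : S, a * a = a → χ.1 a = decide (e * a = e) := by
    have h0 := congrFun hstd ψ₀
    rw [Pmin_apply, Std_apply] at h0
    have hcond : ψ₀.1 e = true ∧
        ∀ f : S, f * f = f → e * f = f → f ≠ e → ψ₀.1 f = false := by
      constructor
      · rw [hψ₀val]; simp [he]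
      · intro f hf hef hne
        rw [hψ₀val]
        simp only [decide_eq_false_iff_not]
        intro hh
        exact hne (by rw [← hef, hh])
    rw [if_pos hcond] at h0
    have hagree : ∀ a : S, a * a = a → ψ₀.1 a = χ.1 a := by
      by_contra hcontra
      rw [if_neg hcontra] at h0
      norm_num at h0
    intro a ha
    rw [← hagree a ha, hψ₀val]
  -- Step C : order relation transfers under conjugation
  have hC : ∀ a : S, a * a = a → (e * (t * a * s) = e ↔ (s * e * t) * a = s * e * t) := by
    intro a ha
    constructor
    · intro h
      calc (s * e * t) * a = ((s * e * t) * (s * t)) * a := by rw [he'st]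
        _ = (s * e * t) * ((s * t) * a) := by rw [mul_assoc]
        _ = (s * e * t) * (a * (s * t)) := by rw [← comm ha hE2]
        _ = s * ((e * (t * a * s)) * t) := by simp only [mul_assoc]
        _ = s * (e * t) := by rw [h]
        _ = s * e * t := by rw [mul_assoc]
    · intro h
      calc e * (t * a * s) = t * ((s * e * t) * (a * s)) := by
            simp only [mul_assoc]; rw [lts_e]
        _ = t * (((s * e * t) * a) * s) := by rw [← mul_assoc (s * e * t) a s]
        _ = t * ((s * e * t) * s) := by rw [h]
        _ = e := by simp only [mul_assoc]; rw [show e * (t * s) = e from hle]; exact htse'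
  have hgval : ∀ a : S, a * a = a →
      χ.1 (t * a * s) = decide ((s * e * t) * a = s * e * t) := by
    intro a ha
    rw [hχ _ (hconj_idem a ha)]
    exact decide_eq_decide.mpr (hC a ha)
  -- reindex the product
  have hprod : (∏ f ∈ Finset.univ.filter (fun f : S => f * f = f ∧ e * f = f ∧ f ≠ e),
        (1 - uFun (s * f * t))) =
      ∏ f ∈ Finset.univ.filter
        (fun f : S => f * f = f ∧ (s * e * t) * f = f ∧ f ≠ s * e * t),
        (1 - uFun f) := by
    refine Finset.prod_nbij' (fun f => s * f * t) (fun f => t * f * s) ?_ ?_ ?_ ?_ ?_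
    · -- maps into
      intro f hf
      simp only [Finset.mem_filter, Finset.mem_univ, true_and] at hf ⊢
      obtain ⟨hff, hef, hfe⟩ := hf
      have lf : ∀ z : S, f * (f * z) = f * z := fun z => by rw [← mul_assoc, hff]
      have le_f : ∀ z : S, e * (f * z) = f * z := fun z => by
        have := congrArg (· * z) hef; simpa only [mul_assoc] using this
      have hfts : f * (t * s) = f := by
        calc f * (t * s) = (t * s) * f := comm hff hE1
          _ = (t * s) * (e * f) := by rw [hef]
          _ = ((t * s) * e) * f := (mul_assoc _ _ _).symm
          _ = e * f := by rw [htse]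
          _ = f := hef
      have htsf : (t * s) * f = f := by rw [comm hE1 hff]; exact hfts
      have lf_ts : ∀ z : S, f * (t * (s * z)) = f * z := fun z => by
        have := congrArg (· * z) hfts; simpa only [mul_assoc] using this
      have lts_f : ∀ z : S, t * (s * (f * z)) = f * z := fun z => by
        have := congrArg (· * z) htsf; simpa only [mul_assoc] using this
      have hretr : t * (s * f * t) * s = f := by
        simp only [mul_assoc]
        rw [show f * (t * s) = f from hfts, ← mul_assoc]
        exact htsf
      refine ⟨?_, ?_, ?_⟩
      · simp only [mul_assoc]
        rw [lts_f, lf]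
      · simp only [mul_assoc]
        rw [lts_f, le_f]
      · intro hh
        apply hfe
        calc f = t * (s * f * t) * s := hretr.symm
          _ = t * (s * e * t) * s := by rw [hh]
          _ = e := hete'
    · -- maps back
      intro f hf
      simp only [Finset.mem_filter, Finset.mem_univ, true_and] at hf ⊢
      obtain ⟨hff, hef, hfe⟩ := hf
      have lf : ∀ z : S, f * (f * z) = f * z := fun z => by rw [← mul_assoc, hff]
      have le'_f : ∀ z : S, (s * e * t) * (f * z) = f * z := fun z => by
        have := congrArg (· * z) hef; simpa only [mul_assoc] using this
      have hstf : (s * t) * f = f := by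
        calc (s * t) * f = (s * t) * ((s * e * t) * f) := by rw [hef]
          _ = ((s * t) * (s * e * t)) * f := (mul_assoc _ _ _).symm
          _ = (s * e * t) * f := by
            congr 1
            simp only [mul_assoc]
            rw [lst_s]
          _ = f := hef
      have hfst : f * (s * t) = f := by rw [comm hff hE2]; exact hstf
      have lst_f : ∀ z : S, s * (t * (f * z)) = f * z := fun z => by
        have := congrArg (· * z) hstf; simpa only [mul_assoc] using this
      have hretr' : s * (t * f * s) * t = f := by
        simp only [mul_assoc]
        rw [show f * (s * t) = f from hfst, ← mul_assoc]
        exact hstf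
      refine ⟨hconj_idem f hff, ?_, ?_⟩
      · -- e * (t*f*s) = t*f*s
        have key : t * f * s = e * (t * f * s) := by
          conv_lhs => rw [← hef]
          simp only [mul_assoc]
          rw [lts_e]
        exact key.symm
      · intro hh
        apply hfe
        calc f = s * (t * f * s) * t := hretr'.symm
          _ = s * e * t := by rw [hh]
    · -- left inverse
      intro f hf
      simp only [Finset.mem_filter, Finset.mem_univ, true_and] at hf
      obtain ⟨hff, hef, hfe⟩ := hf
      have hfts : f * (t * s) = f := by
        calc f * (t * s) = (t * s) * f := comm hff hE1
          _ = (t * s) * (e * f) := by rw [hef]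
          _ = ((t * s) * e) * f := (mul_assoc _ _ _).symm
          _ = e * f := by rw [htse]
          _ = f := hef
      have htsf : (t * s) * f = f := by rw [comm hE1 hff]; exact hfts
      simp only [mul_assoc]
      rw [show f * (t * s) = f from hfts, ← mul_assoc]
      exact htsf
    · -- right inverse
      intro f hf
      simp only [Finset.mem_filter, Finset.mem_univ, true_and] at hf
      obtain ⟨hff, hef, hfe⟩ := hf
      have hstf : (s * t) * f = f := by
        calc (s * t) * f = (s * t) * ((s * e * t) * f) := by rw [hef]
          _ = ((s * t) * (s * e * t)) * f := (mul_assoc _ _ _).symm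
          _ = (s * e * t) * f := by
            congr 1
            simp only [mul_assoc]
            rw [lst_s]
          _ = f := hef
      have hfst : f * (s * t) = f := by rw [comm hff hE2]; exact hstf
      simp only [mul_assoc]
      rw [show f * (s * t) = f from hfst, ← mul_assoc]
      exact hstf
    · intro f hf
      rfl
  rw [hprod]
  funext ψ
  rw [Pmin_apply, Std_apply]
  refine if_congr ?_ rfl rfl
  constructor
  · intro h
    constructor
    · have hh := h (s * e * t) he'
      rw [hgval _ he'] at hh
      rw [hh]
      simp [he']
    · intro f hff hef hfe
      have hh := h f hff
      rw [hgval f hff] at hh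
      rw [hh]
      simp only [decide_eq_false_iff_not]
      intro hcontra
      exact hfe (by rw [← hef, hcontra])
  · rintro ⟨hy, hz⟩ a ha
    show ψ.1 a = χ.1 (t * a * s)
    rw [hgval a ha]
    by_cases hcase : (s * e * t) * a = s * e * t
    · have hm := ψ.2.1 (s * e * t) a he' ha
      rw [hcase, hy] at hm
      have : ψ.1 a = true := by simpa using hm.symm
      simp [this, hcase]
    · have hfidem := idm he' ha
      have h1f : (s * e * t) * ((s * e * t) * a) = (s * e * t) * a := by
        rw [← mul_assoc, he']
      have hzf := hz ((s * e * t) * a) hfidem h1f hcase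
      have hm := ψ.2.1 (s * e * t) a he' ha
      rw [hzf, hy] at hm
      have : ψ.1 a = false := by simpa using hm.symm
      simp [this, hcase]
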